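/- Let S be a metric space, C ≥ 0 and C₁ ≥ 0 real numbers, and let x : [0,1] → S and z : [0,1] → ℝ be maps such that: (i) for all s, t ∈ [0,1] with s ≤ t, the total variation of x on [s,t] is at most C·dist(x(s), x(t)); and (ii) for all s, t ∈ [0,1], |z(t) − z(s)| ≤ C₁·dist(x(s), x(t)). Consider the curve γ(t) = (x(t), z(t)) in the product S × ℝ equipped with the ℓ² product metric dist((a,u),(b,v)) = √(dist(a,b)² + (u−v)²). Then for all s, t ∈ [0,1] with s ≤ t: (1) dist(γ(s), γ(t)) ≤ √(1 + C₁²)·dist(x(s), x(t)); (2) the total variation of γ on [s,t] is at most √(1 + C₁²) times the total variation of x on [s,t]; (3) the total variation of γ on [s,t] is at most √(1 + C₁²)·C·dist(γ(s), γ(t)). -/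

import Mathlib

lemma dist_l2_prod {α β : Type*} [PseudoMetricSpace α] [PseudoMetricSpace β]
    (a b : WithLp 2 (α × β)) :
    dist a b = Real.sqrt (dist a.fst b.fst ^ 2 + dist a.snd b.snd ^ 2) := by
  have h2 : (2 : ENNReal).toReal = 2 := by norm_num
  rw [WithLp.prod_dist_eq_add (by rw [h2]; norm_num), h2, Real.sqrt_eq_rpow]
  rw [show ((2:ℝ)) = ((2:ℕ):ℝ) by norm_num, Real.rpow_natCast, Real.rpow_natCast]


/-- The Legendrian lift `t ↦ (x t, z t)` of a plane curve, viewed in the `ℓ²` product metric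
on `S × ℝ`. -/
noncomputable def legendrianLift {S : Type*} (x : ℝ → S) (z : ℝ → ℝ) : ℝ → WithLp 2 (S × ℝ) :=
  fun t => (WithLp.equiv 2 (S × ℝ)).symm (x t, z t)

/-- Auxiliary: pointwise comparison of increments gives comparison of variations. -/
lemma evar_le_mul_of_pointwise {α E F : Type*} [LinearOrder α] [PseudoEMetricSpace E]
    [PseudoEMetricSpace F] (f : α → E) (g : α → F) (s : Set α) (c : ENNReal)
    (h : ∀ u ∈ s, ∀ v ∈ s, edist (f u) (f v) ≤ c * edist (g u) (g v)) :
    eVariationOn f s ≤ c * eVariationOn g s := by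
  refine iSup_le fun p => ?_
  calc ∑ i ∈ Finset.range p.1, edist (f (p.2.1 (i + 1))) (f (p.2.1 i))
      ≤ ∑ i ∈ Finset.range p.1, c * edist (g (p.2.1 (i + 1))) (g (p.2.1 i)) :=
        Finset.sum_le_sum fun i _ => h _ (p.2.2.2 _) _ (p.2.2.2 _)
    _ = c * ∑ i ∈ Finset.range p.1, edist (g (p.2.1 (i + 1))) (g (p.2.1 i)) := by
        rw [Finset.mul_sum]
    _ ≤ c * eVariationOn g s :=
        mul_le_mul_right (eVariationOn.sum_le (f := g) (n := p.1) p.2.2.1 p.2.2.2) c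

/-- If the projection `x` is `C`-Lavrentiev on `[0,1]` and the increments of `z` are bounded
by `C₁` times the distance of the corresponding projections, then for the lifted curve
`γ = (x, z)` in the `ℓ²` product metric: (1) `dist(γ s, γ t) ≤ √(1+C₁²)·dist(x s, x t)`;
(2) the variation of `γ` on `[s,t]` is at most `√(1+C₁²)` times that of `x`; and (3) `γ` is
`√(1+C₁²)·C`-Lavrentiev. -/
theorem legendrian_lift_lavrentiev
    {S : Type*} [MetricSpace S] (C C₁ : ℝ) (hC : 0 ≤ C) (hC₁ : 0 ≤ C₁)
    (x : ℝ → S) (z : ℝ → ℝ)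
    (hx : ∀ s ∈ Set.Icc (0:ℝ) 1, ∀ t ∈ Set.Icc (0:ℝ) 1, s ≤ t →
      eVariationOn x (Set.Icc s t) ≤ ENNReal.ofReal (C * dist (x s) (x t)))
    (hz : ∀ s ∈ Set.Icc (0:ℝ) 1, ∀ t ∈ Set.Icc (0:ℝ) 1, |z t - z s| ≤ C₁ * dist (x s) (x t)) :
    ∀ s ∈ Set.Icc (0:ℝ) 1, ∀ t ∈ Set.Icc (0:ℝ) 1, s ≤ t →
      (dist (legendrianLift x z s) (legendrianLift x z t) ≤
        Real.sqrt (1 + C₁ ^ 2) * dist (x s) (x t)) ∧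
      (eVariationOn (legendrianLift x z) (Set.Icc s t) ≤
        ENNReal.ofReal (Real.sqrt (1 + C₁ ^ 2)) * eVariationOn x (Set.Icc s t)) ∧
      (eVariationOn (legendrianLift x z) (Set.Icc s t) ≤
        ENNReal.ofReal (Real.sqrt (1 + C₁ ^ 2) * C *
          dist (legendrianLift x z s) (legendrianLift x z t))) := by
  have sqrt_nonneg : (0:ℝ) ≤ Real.sqrt (1 + C₁ ^ 2) := Real.sqrt_nonneg _
  -- key pointwise estimate
  have key : ∀ u ∈ Set.Icc (0:ℝ) 1, ∀ v ∈ Set.Icc (0:ℝ) 1,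
      dist (legendrianLift x z u) (legendrianLift x z v) ≤
        Real.sqrt (1 + C₁ ^ 2) * dist (x u) (x v) := by
    intro u hu v hv
    have hd : dist (legendrianLift x z u) (legendrianLift x z v) =
        Real.sqrt (dist (x u) (x v) ^ 2 + dist (z u) (z v) ^ 2) :=
      dist_l2_prod _ _
    rw [hd]
    have hzz : dist (z u) (z v) ≤ C₁ * dist (x u) (x v) := by
      have := hz u hu v hv
      rwa [Real.dist_eq, abs_sub_comm]
    have h1 : dist (x u) (x v) ^ 2 + dist (z u) (z v) ^ 2 ≤
        (1 + C₁ ^ 2) * dist (x u) (x v) ^ 2 := by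
      have : dist (z u) (z v) ^ 2 ≤ (C₁ * dist (x u) (x v)) ^ 2 := by
        apply sq_le_sq' _ hzz
        nlinarith [dist_nonneg (x := z u) (y := z v)]
      nlinarith
    calc Real.sqrt (dist (x u) (x v) ^ 2 + dist (z u) (z v) ^ 2)
        ≤ Real.sqrt ((1 + C₁ ^ 2) * dist (x u) (x v) ^ 2) := Real.sqrt_le_sqrt h1
      _ = Real.sqrt (1 + C₁ ^ 2) * dist (x u) (x v) := by
          rw [Real.sqrt_mul (by positivity), Real.sqrt_sq dist_nonneg]
  -- projection is nonexpansive on the lift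
  have proj : ∀ u v : ℝ, dist (x u) (x v) ≤
      dist (legendrianLift x z u) (legendrianLift x z v) := by
    intro u v
    rw [dist_l2_prod]
    calc dist (x u) (x v) = Real.sqrt (dist (x u) (x v) ^ 2) :=
          (Real.sqrt_sq dist_nonneg).symm
      _ ≤ _ := Real.sqrt_le_sqrt (le_add_of_nonneg_right (sq_nonneg (dist (z u) (z v))))
  intro s hs t ht hst
  have hsub : Set.Icc s t ⊆ Set.Icc (0:ℝ) 1 := Set.Icc_subset_Icc hs.1 ht.2
  have h1 := key s hs t ht
  have h2 : eVariationOn (legendrianLift x z) (Set.Icc s t) ≤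
      ENNReal.ofReal (Real.sqrt (1 + C₁ ^ 2)) * eVariationOn x (Set.Icc s t) := by
    refine evar_le_mul_of_pointwise _ _ _ _ fun u hu v hv => ?_
    rw [edist_dist, edist_dist, ← ENNReal.ofReal_mul sqrt_nonneg]
    exact ENNReal.ofReal_le_ofReal (key u (hsub hu) v (hsub hv))
  refine ⟨h1, h2, ?_⟩
  calc eVariationOn (legendrianLift x z) (Set.Icc s t)
      ≤ ENNReal.ofReal (Real.sqrt (1 + C₁ ^ 2)) * eVariationOn x (Set.Icc s t) := h2
    _ ≤ ENNReal.ofReal (Real.sqrt (1 + C₁ ^ 2)) * ENNReal.ofReal (C * dist (x s) (x t)) :=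
        mul_le_mul_right (hx s hs t ht hst) _
    _ = ENNReal.ofReal (Real.sqrt (1 + C₁ ^ 2) * (C * dist (x s) (x t))) :=
        (ENNReal.ofReal_mul sqrt_nonneg).symm
    _ ≤ ENNReal.ofReal (Real.sqrt (1 + C₁ ^ 2) * C *
          dist (legendrianLift x z s) (legendrianLift x z t)) := by
        apply ENNReal.ofReal_le_ofReal
        rw [mul_assoc]
        exact mul_le_mul_of_nonneg_left
          (mul_le_mul_of_nonneg_left (proj s t) hC) sqrt_nonneg
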